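/- Let C be a convex subset of ℝ^d, and let P₁ and P₂ be two distinct extreme points of C. Let Ω be a finite set and let q₁, q₂ : Ω → ℝ be nonnegative weight functions each summing to 1, and suppose there exists ω₀ ∈ Ω with q₁(ω₀) > 0 and q₂(ω₀) > 0 (overlapping supports). Then there is no map T : Ω → C satisfying both ∑_{ω∈Ω} q₁(ω) • T(ω) = P₁ and ∑_{ω∈Ω} q₂(ω) • T(ω) = P₂. In other words, no point estimator valued in C is simultaneously unbiased at two distinct extreme points whose sampling distributions have overlapping supports. -/

import Mathlib

lemma aux_extreme {d : ℕ} {C : Set (EuclideanSpace ℝ (Fin d))} (hC : Convex ℝ C)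
    {P : EuclideanSpace ℝ (Fin d)} (hP : P ∈ Set.extremePoints ℝ C)
    {Ω : Type*} [Fintype Ω] (q : Ω → ℝ)
    (hq0 : ∀ ω, 0 ≤ q ω) (hq1 : ∑ ω, q ω = 1)
    (T : Ω → EuclideanSpace ℝ (Fin d)) (hT : ∀ ω, T ω ∈ C)
    (hsum : ∑ ω, q ω • T ω = P) (ω₀ : Ω) (hpos : 0 < q ω₀) : T ω₀ = P := by
  classical
  set a := q ω₀ with ha
  have hsplit : ∑ ω, q ω • T ω = a • T ω₀ + ∑ ω ∈ Finset.univ.erase ω₀, q ω • T ω := by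
    rw [← Finset.add_sum_erase _ _ (Finset.mem_univ ω₀)]
  have hsplitw : (1 : ℝ) = a + ∑ ω ∈ Finset.univ.erase ω₀, q ω := by
    rw [← hq1, ← Finset.add_sum_erase _ _ (Finset.mem_univ ω₀)]
  set b := ∑ ω ∈ Finset.univ.erase ω₀, q ω with hb
  have hb0 : 0 ≤ b := Finset.sum_nonneg fun ω _ => hq0 ω
  rcases eq_or_lt_of_le hb0 with hb0' | hbpos
  · -- b = 0, so all other weights zero, a = 1
    have hz : ∀ ω ∈ Finset.univ.erase ω₀, q ω = 0 := by
      intro ω hw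
      exact (Finset.sum_eq_zero_iff_of_nonneg fun ω _ => hq0 ω).1 hb0'.symm ω hw
    have ha1 : a = 1 := by rw [← hb0'] at hsplitw; linarith
    have hrest : ∑ ω ∈ Finset.univ.erase ω₀, q ω • T ω = 0 :=
      Finset.sum_eq_zero fun ω hw => by rw [hz ω hw, zero_smul]
    rw [hsplit, hrest, add_zero, ha1, one_smul] at hsum
    exact hsum
  · -- b > 0: form the convex combination y of the rest
    set y := b⁻¹ • ∑ ω ∈ Finset.univ.erase ω₀, q ω • T ω with hy
    have hyC : y ∈ C := by
      rw [hy, Finset.smul_sum]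
      have : ∀ ω ∈ Finset.univ.erase ω₀, b⁻¹ • q ω • T ω = (b⁻¹ * q ω) • T ω := by
        intro ω _; rw [smul_smul]
      rw [Finset.sum_congr rfl this]
      refine hC.sum_mem (fun ω _ => mul_nonneg (inv_nonneg.2 hb0) (hq0 ω)) ?_
        (fun ω _ => hT ω)
      rw [← Finset.mul_sum, ← hb, inv_mul_cancel₀ (ne_of_gt hbpos)]
    have hPseg : P ∈ openSegment ℝ (T ω₀) y := by
      refine ⟨a, b, hpos, hbpos, by linarith, ?_⟩
      rw [hy, smul_inv_smul₀ (ne_of_gt hbpos), ← hsplit, hsum]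
    exact hP.2 (hT ω₀) hyC hPseg

theorem stmt_0 {d : ℕ} (C : Set (EuclideanSpace ℝ (Fin d))) (hC : Convex ℝ C)
    (P₁ P₂ : EuclideanSpace ℝ (Fin d))
    (hP₁ : P₁ ∈ Set.extremePoints ℝ C) (hP₂ : P₂ ∈ Set.extremePoints ℝ C)
    (hne : P₁ ≠ P₂)
    {Ω : Type*} [Fintype Ω] (q₁ q₂ : Ω → ℝ)
    (hq₁0 : ∀ ω, 0 ≤ q₁ ω) (hq₂0 : ∀ ω, 0 ≤ q₂ ω)
    (hq₁1 : ∑ ω, q₁ ω = 1) (hq₂1 : ∑ ω, q₂ ω = 1)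
    (ω₀ : Ω) (h₁ : 0 < q₁ ω₀) (h₂ : 0 < q₂ ω₀) :
    ¬ ∃ T : Ω → EuclideanSpace ℝ (Fin d),
        (∀ ω, T ω ∈ C) ∧ (∑ ω, q₁ ω • T ω = P₁) ∧ (∑ ω, q₂ ω • T ω = P₂) := by
  rintro ⟨T, hT, hs₁, hs₂⟩
  have e₁ := aux_extreme hC hP₁ q₁ hq₁0 hq₁1 T hT hs₁ ω₀ h₁
  have e₂ := aux_extreme hC hP₂ q₂ hq₂0 hq₂1 T hT hs₂ ω₀ h₂
  exact hne (e₁ ▸ e₂)
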